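/- Fix N ≥ 1, distinct reals b₁,…,b_N, c₁,…,c_N with bᵢ ≠ cⱼ and cᵢ ≠ bⱼ for all i ≠ j, nonzero reals A₁,…,A_N, and functions fᵢ: ℤⁿ → ℝ with fᵢ(σ) ≠ 0 for all σ. Define Z_{i,j} = (bᵢ−bⱼ)(cᵢ−cⱼ)/((bᵢ−cⱼ)(cᵢ−bⱼ)) and τ(σ) = Σ_{T⊆[N]} ∏_{i<j∈T} Z_{i,j} · ∏_{i∈T} fᵢ(σ). Fix k ∈ [N]. Let τ' be defined the same way but with f_k replaced by A_k²/f_k and Z_{i,k}, Z_{k,j} replaced by their reciprocals. Then τ'(σ) = (A_k²/f_k(σ)) · Σ_{T⊆[N]} ∏_{i<j∈T} Z_{i,j} · ∏_{i∈T} g_i(σ), where g_k = f_k/A_k² and g_j = f_j/Z_{k,j} (with Z_{k,j} interpreted as Z_{j,k} when j < k) for j ≠ k. -/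

import Mathlib

/-- Inserting a new index `k` into the ordered-pair product of a symmetric
array `W` multiplies it by `∏ i in S, W k i`. -/
lemma pair_prod_insert {N : ℕ} (W : Fin N → Fin N → ℝ)
    (hsym : ∀ i j, W i j = W j i) (k : Fin N) (S : Finset (Fin N)) (hk : k ∉ S) :
    (∏ i ∈ insert k S, ∏ j ∈ (insert k S).filter (fun j => i < j), W i j) =
      (∏ i ∈ S, ∏ j ∈ S.filter (fun j => i < j), W i j) * ∏ i ∈ S, W k i := by
  rw [Finset.prod_insert hk]
  have h1 : (insert k S).filter (fun j => k < j) = S.filter (fun j => k < j) := by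
    rw [Finset.filter_insert, if_neg (lt_irrefl k)]
  have h2 : ∀ i ∈ S, (∏ j ∈ (insert k S).filter (fun j => i < j), W i j) =
      (if i < k then W i k else 1) * ∏ j ∈ S.filter (fun j => i < j), W i j := by
    intro i hi
    rw [Finset.filter_insert]
    by_cases h : i < k
    · rw [if_pos h, if_pos h,
        Finset.prod_insert (fun hmem => hk (Finset.mem_filter.mp hmem).1)]
    · rw [if_neg h, if_neg h, one_mul]
  rw [h1, Finset.prod_congr rfl h2, Finset.prod_mul_distrib]
  have h3 : (∏ i ∈ S, if i < k then W i k else 1) =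
      ∏ i ∈ S.filter (fun i => i < k), W i k := (Finset.prod_filter _ _).symm
  have h4 : (∏ i ∈ S.filter (fun i => i < k), W i k) =
      ∏ i ∈ S.filter (fun i => ¬ k < i), W k i := by
    have hfe : S.filter (fun i => i < k) = S.filter (fun i => ¬ k < i) := by
      apply Finset.filter_congr
      intro x hx
      constructor
      · intro h; exact not_lt_of_gt h
      · intro h
        rcases lt_or_eq_of_le (not_lt.mp h) with h' | h'
        · exact h'
        · exact absurd h' (fun e => hk (e ▸ hx))
    rw [hfe]
    exact Finset.prod_congr rfl (fun x _ => hsym x k)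
  rw [h3, h4]
  rw [← Finset.prod_filter_mul_prod_filter_not S (fun i => k < i) (fun i => W k i)]
  ring

/-- Algebraic core of the `b_k ↔ c_k` swap symmetry for N-soliton τ-functions:
replacing `f_k` by `A_k²/f_k` and each `Z_{i,k}, Z_{k,j}` by its reciprocal
transforms the subset sum into `(A_k²/f_k) · Σ_T ∏ Z ∏ g` with `g_k = f_k/A_k²`
and `g_j = f_j/Z_{k,j}` for `j ≠ k`. -/
theorem soliton_swap_symmetry (N n : ℕ) (hN : 1 ≤ N)
    (b c A : Fin N → ℝ)
    (hbc : ∀ i j, b i ≠ c j)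
    (hbb : Function.Injective b) (hcc : Function.Injective c)
    (hA : ∀ i, A i ≠ 0)
    (f : Fin N → (Fin n → ℤ) → ℝ) (hf : ∀ i σ, f i σ ≠ 0)
    (k : Fin N) (σ : Fin n → ℤ)
    (Z : Fin N → Fin N → ℝ)
    (hZ : ∀ i j, Z i j = (b i - b j) * (c i - c j) / ((b i - c j) * (c i - b j)))
    (f' : Fin N → ℝ)
    (hf' : ∀ i, f' i = if i = k then (A k) ^ 2 / f k σ else f i σ)
    (Z' : Fin N → Fin N → ℝ)
    (hZ' : ∀ i j, Z' i j = if i = k ∨ j = k then (Z i j)⁻¹ else Z i j)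
    (g : Fin N → ℝ)
    (hg : ∀ i, g i = if i = k then f k σ / (A k) ^ 2 else f i σ / Z k i) :
    (∑ T : Finset (Fin N),
        (∏ i ∈ T, ∏ j ∈ T.filter fun j => i < j, Z' i j) * ∏ i ∈ T, f' i) =
      ((A k) ^ 2 / f k σ) *
        ∑ T : Finset (Fin N),
          (∏ i ∈ T, ∏ j ∈ T.filter fun j => i < j, Z i j) * ∏ i ∈ T, g i := by
  have hZsymm : ∀ i j, Z i j = Z j i := by
    intro i j
    have h1 : b i - c j ≠ 0 := sub_ne_zero.mpr (hbc i j)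
    have h2 : c i - b j ≠ 0 := sub_ne_zero.mpr fun h => hbc j i h.symm
    have h3 : b j - c i ≠ 0 := sub_ne_zero.mpr (hbc j i)
    have h4 : c j - b i ≠ 0 := sub_ne_zero.mpr fun h => hbc i j h.symm
    rw [hZ, hZ, div_eq_div_iff (mul_ne_zero h1 h2) (mul_ne_zero h3 h4)]
    ring
  have hZne : ∀ i, i ≠ k → Z k i ≠ 0 := by
    intro i hi
    rw [hZ]
    apply div_ne_zero
    · exact mul_ne_zero (sub_ne_zero.mpr fun h => hi (hbb h).symm)
        (sub_ne_zero.mpr fun h => hi (hcc h).symm)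
    · exact mul_ne_zero (sub_ne_zero.mpr (hbc k i))
        (sub_ne_zero.mpr fun h => hbc i k h.symm)
  have hZ'symm : ∀ i j, Z' i j = Z' j i := by
    intro i j
    rw [hZ', hZ', hZsymm i j]
    by_cases hik : i = k <;> by_cases hjk : j = k <;> simp [hik, hjk]
  rw [Finset.mul_sum]
  have hinv : Function.Involutive
      (fun T : Finset (Fin N) => if k ∈ T then T.erase k else insert k T) := by
    intro T
    by_cases h : k ∈ T
    · simp [h, Finset.notMem_erase, Finset.insert_erase h]
    · simp [h, Finset.erase_insert h]
  refine Fintype.sum_equiv hinv.toPerm _ _ ?_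
  intro T
  simp only [Function.Involutive.coe_toPerm]
  by_cases h : k ∈ T
  · -- T = insert k S
    obtain ⟨S, hkS, rfl⟩ : ∃ S, k ∉ S ∧ insert k S = T :=
      ⟨T.erase k, Finset.notMem_erase k T, Finset.insert_erase h⟩
    rw [if_pos h, Finset.erase_insert hkS]
    rw [pair_prod_insert Z' hZ'symm k S hkS, Finset.prod_insert hkS]
    have e1 : (∏ i ∈ S, ∏ j ∈ S.filter (fun j => i < j), Z' i j) =
        ∏ i ∈ S, ∏ j ∈ S.filter (fun j => i < j), Z i j := by
      refine Finset.prod_congr rfl fun i hi => Finset.prod_congr rfl fun j hj => ?_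
      rw [hZ', if_neg]
      exact fun hor => hor.elim (fun (e : i = k) => hkS (e ▸ hi))
        (fun (e : j = k) => hkS (e ▸ (Finset.mem_filter.mp hj).1))
    have e2 : (∏ i ∈ S, Z' k i) = (∏ i ∈ S, Z k i)⁻¹ := by
      rw [← Finset.prod_inv_distrib]
      exact Finset.prod_congr rfl fun i _ => by rw [hZ', if_pos (Or.inl rfl)]
    have e3 : (∏ i ∈ S, f' i) = ∏ i ∈ S, f i σ :=
      Finset.prod_congr rfl fun i hi => by rw [hf', if_neg (fun (e : i = k) => hkS (e ▸ hi))]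
    have e4 : (∏ i ∈ S, g i) = (∏ i ∈ S, f i σ) / ∏ i ∈ S, Z k i := by
      rw [← Finset.prod_div_distrib]
      exact Finset.prod_congr rfl fun i hi => by
        rw [hg, if_neg (fun (e : i = k) => hkS (e ▸ hi))]
    rw [e1, e2, e3, e4, hf' k, if_pos rfl]
    ring
  · rw [if_neg h]
    rw [pair_prod_insert Z hZsymm k T h, Finset.prod_insert h]
    have e1 : (∏ i ∈ T, ∏ j ∈ T.filter (fun j => i < j), Z' i j) =
        ∏ i ∈ T, ∏ j ∈ T.filter (fun j => i < j), Z i j := by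
      refine Finset.prod_congr rfl fun i hi => Finset.prod_congr rfl fun j hj => ?_
      rw [hZ', if_neg]
      exact fun hor => hor.elim (fun (e : i = k) => h (e ▸ hi))
        (fun (e : j = k) => h (e ▸ (Finset.mem_filter.mp hj).1))
    have e3 : (∏ i ∈ T, f' i) = ∏ i ∈ T, f i σ :=
      Finset.prod_congr rfl fun i hi => by rw [hf', if_neg (fun (e : i = k) => h (e ▸ hi))]
    have e4 : (∏ i ∈ T, g i) = (∏ i ∈ T, f i σ) / ∏ i ∈ T, Z k i := by
      rw [← Finset.prod_div_distrib]
      exact Finset.prod_congr rfl fun i hi => by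
        rw [hg, if_neg (fun (e : i = k) => h (e ▸ hi))]
    have hPz : (∏ i ∈ T, Z k i) ≠ 0 :=
      Finset.prod_ne_zero_iff.mpr fun i hi => hZne i (fun (e : i = k) => h (e ▸ hi))
    rw [e1, e3, e4, hg k, if_pos rfl]
    have hfk : f k σ ≠ 0 := hf k σ
    have hAk : (A k) ^ 2 ≠ 0 := pow_ne_zero 2 (hA k)
    field_simp
    rw [mul_div_cancel_right₀ _ (hA k)]
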